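/- Let i, j be positive integers with i, j ≤ 2^{r−1} − 1 and let x_i, x_j denote their binary encodings as strings of length r (so the first symbol of each is '0' when i, j are small enough), and let x* be the all-ones string of length r. For arcs e = (v_p, v_q) and e' = (v_{q'}, v_z) in graphs G_i, G_{i'}, define s_e = x_i x* x_i x_p x_i x* x_i x_q x_i x* x_i. Then |overlap(s_e, s_{e'})| ≤ 7r, with equality if and only if i = i' and q = q'. -/

import Mathlib

open List

variable {α : Type*} [DecidableEq α]

/-- The length of the longest suffix of `s` that is also a prefix of `t`. -/
def ovLen (s t : List α) : ℕ :=
  Nat.findGreatest (fun i => s.drop (s.length - i) = t.take i) (min s.length t.length)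

/-- The binary encoding of `i` as a string of length `r` (big-endian, with leading
zeros); `false` represents '0' and `true` represents '1'. -/
def binEnc (r i : ℕ) : List Bool := (List.range r).map fun k => Nat.testBit i (r - 1 - k)

/-- The string `s_e = x_i x* x_i x_p x_i x* x_i x_q x_i x* x_i` constructed for an arc
`e = (v_p, v_q)` of the graph `G_i`, where `x*` is the all-ones string of length r. -/
def sArc (r i p q : ℕ) : List Bool :=
  binEnc r i ++ List.replicate r true ++ binEnc r i ++ binEnc r p ++ binEnc r i ++
    List.replicate r true ++ binEnc r i ++ binEnc r q ++ binEnc r i ++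
    List.replicate r true ++ binEnc r i

lemma binEnc_length (r i : ℕ) : (binEnc r i).length = r := by simp [binEnc]

lemma binEnc_getElem? (r a m : ℕ) (hm : m < r) :
    (binEnc r a)[m]? = some (a.testBit (r - 1 - m)) := by
  simp [binEnc, List.getElem?_map, List.getElem?_range, hm]

lemma binEnc_head (r a : ℕ) (hr : 0 < r) (ha : a < 2 ^ (r - 1)) :
    (binEnc r a)[0]? = some false := by
  rw [binEnc_getElem? r a 0 hr, Nat.sub_zero, Nat.testBit_lt_two_pow ha]

lemma peel {a b : List Bool} {r n : ℕ} (ha : a.length = r) :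
    (a ++ b)[r + n]? = b[n]? := by
  rw [List.getElem?_append_right (by omega)]
  congr 1; omega

lemma enter {a b : List Bool} {r n : ℕ} (ha : a.length = r) (hn : n < r) :
    (a ++ b)[n]? = a[n]? := by
  rw [List.getElem?_append, if_pos (by omega)]

lemma binEnc_inj {r a b : ℕ} (ha : a < 2 ^ r) (hb : b < 2 ^ r)
    (h : binEnc r a = binEnc r b) : a = b := by
  apply Nat.eq_of_testBit_eq
  intro k
  by_cases hk : k < r
  · have h2 := congrArg (fun l => l[r - 1 - k]?) h
    rw [binEnc_getElem? r a (r - 1 - k) (by omega),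
        binEnc_getElem? r b (r - 1 - k) (by omega)] at h2
    have e : r - 1 - (r - 1 - k) = k := by omega
    rw [e] at h2
    exact Option.some_injective _ h2
  · rw [Nat.testBit_lt_two_pow (lt_of_lt_of_le ha (Nat.pow_le_pow_right (by norm_num) (by omega))),
        Nat.testBit_lt_two_pow (lt_of_lt_of_le hb (Nat.pow_le_pow_right (by norm_num) (by omega)))]

lemma sArc_eq (r i p q : ℕ) : sArc r i p q =
    binEnc r i ++ (List.replicate r true ++ (binEnc r i ++ (binEnc r p ++ (binEnc r i ++
    (List.replicate r true ++ (binEnc r i ++ (binEnc r q ++ (binEnc r i ++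
    (List.replicate r true ++ binEnc r i))))))))) := by
  simp [sArc, List.append_assoc]

lemma sArc_length (r i p q : ℕ) : (sArc r i p q).length = 11 * r := by
  simp [sArc, binEnc_length]; ring

lemma replicate_length (r : ℕ) : (List.replicate r true).length = r := by simp

lemma sArc_get2r (r i p q : ℕ) (hr : 0 < r) (hi : i < 2 ^ (r - 1)) :
    (sArc r i p q)[2 * r]? = some false := by
  rw [sArc_eq, show 2 * r = r + (r + 0) by ring, peel (binEnc_length r i),
    peel (replicate_length r), enter (binEnc_length r i) hr, binEnc_head r i hr hi]

lemma sArc_get3r (r i p q : ℕ) (hr : 0 < r) (hp : p < 2 ^ (r - 1)) :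
    (sArc r i p q)[3 * r]? = some false := by
  rw [sArc_eq, show 3 * r = r + (r + (r + 0)) by ring, peel (binEnc_length r i),
    peel (replicate_length r), peel (binEnc_length r i),
    enter (binEnc_length r p) hr, binEnc_head r p hr hp]

lemma sArc_get4r (r i p q : ℕ) (hr : 0 < r) (hi : i < 2 ^ (r - 1)) :
    (sArc r i p q)[4 * r]? = some false := by
  rw [sArc_eq, show 4 * r = r + (r + (r + (r + 0))) by ring, peel (binEnc_length r i),
    peel (replicate_length r), peel (binEnc_length r i), peel (binEnc_length r p),
    enter (binEnc_length r i) hr, binEnc_head r i hr hi]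

lemma sArc_getblk1 (r i p q m : ℕ) (hm : m < r) :
    (sArc r i p q)[r + m]? = some true := by
  rw [sArc_eq, peel (binEnc_length r i), enter (replicate_length r) hm,
    List.getElem?_replicate, if_pos hm]

lemma sArc_getblk5 (r i p q m : ℕ) (hm : m < r) :
    (sArc r i p q)[5 * r + m]? = some true := by
  rw [sArc_eq, show 5 * r + m = r + (r + (r + (r + (r + m)))) by ring,
    peel (binEnc_length r i), peel (replicate_length r), peel (binEnc_length r i),
    peel (binEnc_length r p), peel (binEnc_length r i),
    enter (replicate_length r) hm, List.getElem?_replicate, if_pos hm]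

lemma sArc_drop4 (r i p q : ℕ) : (sArc r i p q).drop (4 * r) =
    binEnc r i ++ (List.replicate r true ++ (binEnc r i ++ (binEnc r q ++ (binEnc r i ++
    (List.replicate r true ++ binEnc r i))))) := by
  rw [sArc_eq, show 4 * r = r + r + r + r by ring,
    ← List.drop_drop, ← List.drop_drop, ← List.drop_drop,
    List.drop_left' (binEnc_length r i), List.drop_left' (replicate_length r),
    List.drop_left' (binEnc_length r i), List.drop_left' (binEnc_length r p)]

lemma sArc_take7 (r i p q : ℕ) : (sArc r i p q).take (7 * r) =
    binEnc r i ++ (List.replicate r true ++ (binEnc r i ++ (binEnc r p ++ (binEnc r i ++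
    (List.replicate r true ++ binEnc r i))))) := by
  have hd : sArc r i p q =
      (binEnc r i ++ (List.replicate r true ++ (binEnc r i ++ (binEnc r p ++ (binEnc r i ++
      (List.replicate r true ++ binEnc r i)))))) ++
      (binEnc r q ++ (binEnc r i ++ (List.replicate r true ++ binEnc r i))) := by
    simp [sArc, List.append_assoc]
  rw [hd, List.take_left' (by simp [binEnc_length]; ring)]


/-- for arcs e = (v_p, v_q) in G_i and e' = (v_{q'}, v_z) in G_{i'},
|overlap(s_e, s_{e'})| ≤ 7r, with equality iff i = i' and q = q'. -/
theorem sArc_overlap (r i i' p q q' z : ℕ) (hr : 2 ≤ r)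
    (hi : 1 ≤ i) (hiu : i ≤ 2 ^ (r - 1) - 1)
    (hi' : 1 ≤ i') (hiu' : i' ≤ 2 ^ (r - 1) - 1)
    (hp : 1 ≤ p) (hpu : p ≤ 2 ^ (r - 1) - 1)
    (hq : 1 ≤ q) (hqu : q ≤ 2 ^ (r - 1) - 1)
    (hq' : 1 ≤ q') (hqu' : q' ≤ 2 ^ (r - 1) - 1)
    (hz : 1 ≤ z) (hzu : z ≤ 2 ^ (r - 1) - 1)
    (h1 : ¬ sArc r i p q <:+: sArc r i' q' z) (h2 : ¬ sArc r i' q' z <:+: sArc r i p q) :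
    ovLen (sArc r i p q) (sArc r i' q' z) ≤ 7 * r ∧
      (ovLen (sArc r i p q) (sArc r i' q' z) = 7 * r ↔ i = i' ∧ q = q') := by
  have hrpos : 0 < r := by omega
  have hpow : 0 < 2 ^ (r - 1) := Nat.pow_pos (by norm_num)
  have hle2 : 2 ^ (r - 1) ≤ 2 ^ r := Nat.pow_le_pow_right (by norm_num) (by omega)
  have hi2 : i < 2 ^ (r - 1) := by omega
  have hi'2 : i' < 2 ^ (r - 1) := by omega
  have hp2 : p < 2 ^ (r - 1) := by omega
  have hq2 : q < 2 ^ (r - 1) := by omega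
  have hq'2 : q' < 2 ^ (r - 1) := by omega
  -- Part B: the 7r-prefix/suffix match characterization
  have hP7 : (sArc r i p q).drop ((sArc r i p q).length - 7 * r) = (sArc r i' q' z).take (7 * r)
      ↔ (i = i' ∧ q = q') := by
    rw [sArc_length, show 11 * r - 7 * r = 4 * r by omega, sArc_drop4, sArc_take7]
    constructor
    · intro h
      obtain ⟨e1, h⟩ := List.append_inj h (by rw [binEnc_length, binEnc_length])
      obtain ⟨-, h⟩ := List.append_inj h (by simp)
      obtain ⟨-, h⟩ := List.append_inj h (by rw [binEnc_length, binEnc_length])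
      obtain ⟨e4, -⟩ := List.append_inj h (by rw [binEnc_length, binEnc_length])
      exact ⟨binEnc_inj (by omega) (by omega) e1, binEnc_inj (by omega) (by omega) e4⟩
    · rintro ⟨rfl, rfl⟩; rfl
  -- Part A: no overlap of length > 7r
  have hA : ∀ k, 7 * r < k → k ≤ 11 * r →
      ¬ ((sArc r i p q).drop ((sArc r i p q).length - k) = (sArc r i' q' z).take k) := by
    intro k hk1 hk2 hP
    rcases eq_or_lt_of_le hk2 with heq | hlt
    · rw [heq, sArc_length, Nat.sub_self, List.drop_zero,
        show (11 : ℕ) * r = (sArc r i' q' z).length by rw [sArc_length],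
        List.take_length] at hP
      exact h1 (hP ▸ List.infix_rfl)
    · have pt : ∀ m, m < k →
          (sArc r i p q)[(11 * r - k) + m]? = (sArc r i' q' z)[m]? := by
        intro m hm
        have h2 := congrArg (fun l => l[m]?) hP
        rwa [sArc_length, List.getElem?_drop, List.getElem?_take, if_pos hm] at h2
      set d := 11 * r - k with hd
      have hd1 : 0 < d := by omega
      have hd4 : d < 4 * r := by omega
      by_cases c1 : d ≤ r
      · have hv := pt (2 * r - d) (by omega)
        rw [show d + (2 * r - d) = 2 * r by omega, sArc_get2r r i p q hrpos hi2,
          show 2 * r - d = r + (r - d) by omega,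
          sArc_getblk1 r i' q' z (r - d) (by omega)] at hv
        simp at hv
      · by_cases c2 : d ≤ 2 * r
        · have hv := pt (3 * r - d) (by omega)
          rw [show d + (3 * r - d) = 3 * r by omega, sArc_get3r r i p q hrpos hp2,
            show 3 * r - d = r + (2 * r - d) by omega,
            sArc_getblk1 r i' q' z (2 * r - d) (by omega)] at hv
          simp at hv
        · by_cases c3 : d ≤ 3 * r
          · have hv := pt (4 * r - d) (by omega)
            rw [show d + (4 * r - d) = 4 * r by omega, sArc_get4r r i p q hrpos hi2,
              show 4 * r - d = r + (3 * r - d) by omega,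
              sArc_getblk1 r i' q' z (3 * r - d) (by omega)] at hv
            simp at hv
          · have hv := pt (2 * r) (by omega)
            rw [show d + 2 * r = 5 * r + (d - 3 * r) by omega,
              sArc_getblk5 r i p q (d - 3 * r) (by omega),
              sArc_get2r r i' q' z hrpos hi'2] at hv
            simp at hv
  -- characterize ovLen as findGreatest up to 11r
  have hkey : ovLen (sArc r i p q) (sArc r i' q' z) =
      Nat.findGreatest (fun n => (sArc r i p q).drop ((sArc r i p q).length - n) =
        (sArc r i' q' z).take n) (11 * r) := by
    unfold ovLen
    rw [sArc_length, sArc_length, min_self]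
  obtain ⟨hF1, hF2, hF3⟩ := (Nat.findGreatest_eq_iff).mp hkey.symm
  have hub : ovLen (sArc r i p q) (sArc r i' q' z) ≤ 7 * r := by
    by_contra hc
    push_neg at hc
    exact hA _ hc hF1 (hF2 (by omega))
  refine ⟨hub, ?_, ?_⟩
  · intro hE
    have hPo := hF2 (by omega)
    rw [hE] at hPo
    exact hP7.mp hPo
  · intro hiq
    have hge : 7 * r ≤ ovLen (sArc r i p q) (sArc r i' q' z) := by
      rw [hkey]
      exact Nat.le_findGreatest (by omega) (hP7.mpr hiq)
    omega
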